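/- Let G be a finite connected weighted undirected graph on n ≥ 2 vertices with symmetric nonnegative weight matrix A, all degrees d_u = Σ_v A_{uv} positive, and Laplacian L = D − A. Let λ₂ denote the second-largest eigenvalue of the symmetric matrix N = D^{-1/2} A D^{-1/2} (equivalently, of the transition matrix P = D^{-1}A), and assume λ₂ < 1. Then for any two distinct vertices u and v and any vector x : V → ℝ with xᵀ L x > 0, one has (x_u − x_v)² / (xᵀ L x) ≤ (1/(1−λ₂))(1/d_u + 1/d_v); that is, the effective resistance satisfies R_{u,v} ≤ (1/(1−λ₂))(1/d_u + 1/d_v). -/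

import Mathlib

open Matrix

local notation "⟪" x ", " y "⟫" => @inner ℝ _ _ x y

lemma erub_dot_sym {n : ℕ} {N : Matrix (Fin n) (Fin n) ℝ} (hNH : N.IsHermitian)
    (g h : Fin n → ℝ) : g ⬝ᵥ (N *ᵥ h) = (N *ᵥ g) ⬝ᵥ h := by
  have hNT : Nᵀ = N := by
    rw [← Matrix.conjTranspose_eq_transpose_of_trivial]; exact hNH
  rw [Matrix.dotProduct_mulVec, ← Matrix.vecMul_transpose, hNT, dotProduct_comm]

lemma erub_spectral_key {n : ℕ} (hn : 2 ≤ n) (N : Matrix (Fin n) (Fin n) ℝ)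
    (hNH : N.IsHermitian) (e : Equiv.Perm (Fin n))
    (hanti : Antitone (hNH.eigenvalues ∘ e))
    (lam2 : ℝ) (hl2 : lam2 = hNH.eigenvalues (e ⟨1, Nat.lt_of_lt_of_le (by norm_num) hn⟩))
    (hgap : lam2 < 1)
    (φ : Fin n → ℝ) (hφ : φ ≠ 0) (hNφ : N *ᵥ φ = φ)
    (w : Fin n → ℝ) (hw : φ ⬝ᵥ w = 0) :
    w ⬝ᵥ (N *ᵥ w) ≤ lam2 * (w ⬝ᵥ w) := by
  haveI : NeZero n := ⟨by omega⟩
  set Bb : OrthonormalBasis (Fin n) ℝ (EuclideanSpace ℝ (Fin n)) :=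
    hNH.eigenvectorBasis.reindex e.symm with hBbdef
  set μ : Fin n → ℝ := fun i => hNH.eigenvalues (e i) with hμdef
  have hBb : ∀ i, N *ᵥ ⇑(Bb i) = μ i • ⇑(Bb i) := by
    intro i
    simpa [hBbdef, OrthonormalBasis.reindex_apply] using hNH.mulVec_eigenvectorBasis (e i)
  -- inner product on EuclideanSpace equals dotProduct
  have hip : ∀ a b : EuclideanSpace ℝ (Fin n), ⟪a, b⟫ = (⇑a : Fin n → ℝ) ⬝ᵥ ⇑b := by
    intro a b
    simp [EuclideanSpace.inner_eq_star_dotProduct]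
    rw [dotProduct_comm]
  -- Parseval
  have parseval : ∀ g h : Fin n → ℝ,
      g ⬝ᵥ h = ∑ i, ((⇑(Bb i) : Fin n → ℝ) ⬝ᵥ g) * ((⇑(Bb i) : Fin n → ℝ) ⬝ᵥ h) := by
    intro g h
    set g' : EuclideanSpace ℝ (Fin n) := (WithLp.equiv 2 (Fin n → ℝ)).symm g
    set h' : EuclideanSpace ℝ (Fin n) := (WithLp.equiv 2 (Fin n → ℝ)).symm h
    have h1 : g ⬝ᵥ h = ⟪g', h'⟫ := by rw [hip]; rfl
    have h2 : ⟪g', h'⟫ = ⟪Bb.repr g', Bb.repr h'⟫ := (Bb.repr.inner_map_map g' h').symm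
    have h3 : ⟪Bb.repr g', Bb.repr h'⟫ = ∑ i, Bb.repr g' i * Bb.repr h' i := by
      rw [hip]; rfl
    rw [h1, h2, h3]
    refine Finset.sum_congr rfl fun i _ => ?_
    rw [Bb.repr_apply_apply, Bb.repr_apply_apply, hip, hip]
    rfl
  -- coefficient of N *ᵥ a
  have hcoef : ∀ (a : Fin n → ℝ) (i : Fin n),
      (⇑(Bb i) : Fin n → ℝ) ⬝ᵥ (N *ᵥ a) = μ i * ((⇑(Bb i) : Fin n → ℝ) ⬝ᵥ a) := by
    intro a i
    rw [erub_dot_sym hNH, hBb, smul_dotProduct, smul_eq_mul]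
  have heig : ∀ i, μ i * ((⇑(Bb i) : Fin n → ℝ) ⬝ᵥ φ) = (⇑(Bb i) : Fin n → ℝ) ⬝ᵥ φ := by
    intro i
    rw [← hcoef φ i, hNφ]
  have hμlt : ∀ i : Fin n, i ≠ 0 → μ i ≤ lam2 := by
    intro i hi
    rw [hl2]
    have : (⟨1, by omega⟩ : Fin n) ≤ i := by
      rw [Fin.le_def]
      simpa using Nat.one_le_iff_ne_zero.2 (fun hh => hi (Fin.ext (by simpa using hh)))
    exact hanti this
  have hφzero : ∀ i : Fin n, i ≠ 0 → (⇑(Bb i) : Fin n → ℝ) ⬝ᵥ φ = 0 := by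
    intro i hi
    have h1 := heig i
    have h2 : μ i < 1 := lt_of_le_of_lt (hμlt i hi) hgap
    nlinarith [h1, h2]
  have hφ0ne : (⇑(Bb 0) : Fin n → ℝ) ⬝ᵥ φ ≠ 0 := by
    intro h0
    have hall : ∀ i, (⇑(Bb i) : Fin n → ℝ) ⬝ᵥ φ = 0 := by
      intro i
      by_cases hi : i = 0
      · rw [hi]; exact h0
      · exact hφzero i hi
    have hpp : φ ⬝ᵥ φ = 0 := by
      rw [parseval φ φ]
      exact Finset.sum_eq_zero fun i _ => by rw [hall i]; ring
    apply hφ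
    funext j
    have hnn : ∀ i ∈ Finset.univ, (0:ℝ) ≤ φ i * φ i := fun i _ => mul_self_nonneg _
    have := (Finset.sum_eq_zero_iff_of_nonneg hnn).1 hpp j (Finset.mem_univ j)
    simpa [mul_self_eq_zero] using this
  have hw0 : (⇑(Bb 0) : Fin n → ℝ) ⬝ᵥ w = 0 := by
    have h1 := parseval φ w
    have h2 : ∑ i, ((⇑(Bb i) : Fin n → ℝ) ⬝ᵥ φ) * ((⇑(Bb i) : Fin n → ℝ) ⬝ᵥ w)
        = ((⇑(Bb 0) : Fin n → ℝ) ⬝ᵥ φ) * ((⇑(Bb 0) : Fin n → ℝ) ⬝ᵥ w) := by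
      apply Finset.sum_eq_single 0
      · intro i _ hi; rw [hφzero i hi]; ring
      · simp
    rw [hw, h2] at h1
    exact (mul_eq_zero.1 h1.symm).resolve_left hφ0ne
  have hL : w ⬝ᵥ (N *ᵥ w) = ∑ i, μ i * ((⇑(Bb i) : Fin n → ℝ) ⬝ᵥ w) ^ 2 := by
    rw [parseval w (N *ᵥ w)]
    refine Finset.sum_congr rfl fun i _ => ?_
    rw [hcoef w i]; ring
  have hR : w ⬝ᵥ w = ∑ i, ((⇑(Bb i) : Fin n → ℝ) ⬝ᵥ w) ^ 2 := by
    rw [parseval w w]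
    exact Finset.sum_congr rfl fun i _ => by ring
  rw [hL, hR, Finset.mul_sum]
  refine Finset.sum_le_sum fun i _ => ?_
  by_cases hi : i = 0
  · rw [hi, hw0]; simp
  · exact mul_le_mul_of_nonneg_right (hμlt i hi) (sq_nonneg _)

/-- **Upper bound on effective resistance (Lovász, Corollary 3.3).** For a finite connected
weighted undirected graph on `n ≥ 2` vertices with symmetric nonnegative weights, positive
degrees and Laplacian `L = D - A`, let `λ₂` be the second-largest eigenvalue of the
normalized adjacency matrix `N = D^{-1/2} A D^{-1/2}` (expressed here by saying that some
reindexing of the eigenvalues of the Hermitian matrix `N` is antitone and `λ₂` is its value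
at index `1`), with `λ₂ < 1`. Then for all distinct `u, v` and every `x` with `xᵀ L x > 0`,
`(x_u - x_v)² / (xᵀ L x) ≤ (1/(1-λ₂)) (1/d_u + 1/d_v)`, i.e. the variationally defined
effective resistance satisfies `R_{u,v} ≤ (1/(1-λ₂))(1/d_u + 1/d_v)`. -/
theorem effective_resistance_upper_bound {n : ℕ} (hn : 2 ≤ n)
    (A : Matrix (Fin n) (Fin n) ℝ)
    (hsymm : A.IsSymm) (hnonneg : ∀ i j, 0 ≤ A i j)
    (hdeg : ∀ u : Fin n, 0 < ∑ w, A u w)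
    (hconn : (SimpleGraph.fromRel (fun u v : Fin n => 0 < A u v)).Connected)
    (N : Matrix (Fin n) (Fin n) ℝ)
    (hNdef : N = fun i j => A i j / (Real.sqrt (∑ w, A i w) * Real.sqrt (∑ w, A j w)))
    (hNH : N.IsHermitian)
    (lam2 : ℝ)
    (hlam2 : ∃ e : Equiv.Perm (Fin n), Antitone (hNH.eigenvalues ∘ e) ∧
      lam2 = hNH.eigenvalues (e ⟨1, by omega⟩))
    (hgap : lam2 < 1)
    (u v : Fin n) (huv : u ≠ v)
    (x : Fin n → ℝ)
    (hx : 0 < x ⬝ᵥ ((Matrix.diagonal (fun w => ∑ z, A w z) - A) *ᵥ x)) :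
    (x u - x v) ^ 2 / (x ⬝ᵥ ((Matrix.diagonal (fun w => ∑ z, A w z) - A) *ᵥ x))
      ≤ (1 / (1 - lam2)) * (1 / (∑ z, A u z) + 1 / (∑ z, A v z)) := by
  obtain ⟨e, hanti, hl2⟩ := hlam2
  haveI : Nonempty (Fin n) := ⟨⟨0, by omega⟩⟩
  set d : Fin n → ℝ := fun i => ∑ z, A i z with hd_def
  have hd : ∀ i, 0 < d i := hdeg
  set s : Fin n → ℝ := fun i => Real.sqrt (d i) with hs_def
  have hs : ∀ i, 0 < s i := fun i => Real.sqrt_pos.2 (hd i)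
  have hs2 : ∀ i, s i ^ 2 = d i := fun i => Real.sq_sqrt (hd i).le
  set y : Fin n → ℝ := fun i => s i * x i with hy_def
  have hNs : ∀ i j, N i j = A i j / (s i * s j) := by
    intro i j; rw [hNdef]
  -- s is eigenvector of N with eigenvalue 1
  have hNφ : N *ᵥ s = s := by
    funext i
    have hterm : ∀ j, N i j * s j = A i j / s i := by
      intro j
      rw [hNs]
      have h1 := (hs i).ne'
      have h2 := (hs j).ne'
      field_simp
    simp only [Matrix.mulVec, dotProduct]
    calc ∑ j, N i j * s j = ∑ j, A i j / s i := Finset.sum_congr rfl fun j _ => hterm j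
      _ = d i / s i := by rw [← Finset.sum_div]
      _ = s i := Real.div_sqrt
  have hφne : s ≠ 0 := by
    intro h
    exact absurd (congrFun h u) (ne_of_gt (hs u))
  -- quadratic form identity
  set Q : ℝ := x ⬝ᵥ ((Matrix.diagonal d - A) *ᵥ x) with hQ_def
  have hyy : y ⬝ᵥ y = x ⬝ᵥ (Matrix.diagonal d *ᵥ x) := by
    simp only [dotProduct, hy_def]
    refine Finset.sum_congr rfl fun i _ => ?_
    rw [Matrix.mulVec_diagonal, ← hs2 i]
    ring
  have hyNy : y ⬝ᵥ (N *ᵥ y) = x ⬝ᵥ (A *ᵥ x) := by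
    simp only [dotProduct, Matrix.mulVec, hy_def, Finset.mul_sum]
    refine Finset.sum_congr rfl fun i _ => Finset.sum_congr rfl fun j _ => ?_
    rw [hNs]
    have h1 := (hs i).ne'
    have h2 := (hs j).ne'
    field_simp
  have hQ : Q = y ⬝ᵥ y - y ⬝ᵥ (N *ᵥ y) := by
    rw [hQ_def, Matrix.sub_mulVec, dotProduct_sub, hyy, hyNy]
  -- decomposition y = z + c • s
  have hφφ : 0 < s ⬝ᵥ s := by
    have h0 : s ⬝ᵥ s = ∑ i, s i * s i := rfl
    rw [h0]
    exact Finset.sum_pos (fun i _ => mul_pos (hs i) (hs i)) Finset.univ_nonempty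
  set c : ℝ := (s ⬝ᵥ y) / (s ⬝ᵥ s) with hc_def
  set z : Fin n → ℝ := y - c • s with hz_def
  have hyz : y = z + c • s := by rw [hz_def]; abel
  have hφz : s ⬝ᵥ z = 0 := by
    rw [hz_def, dotProduct_sub, dotProduct_smul, hc_def, smul_eq_mul]
    field_simp
    ring
  have hzφ : z ⬝ᵥ s = 0 := by rw [dotProduct_comm]; exact hφz
  have hφNz : s ⬝ᵥ (N *ᵥ z) = 0 := by
    rw [erub_dot_sym hNH, hNφ, hφz]
  have hQz : Q = z ⬝ᵥ z - z ⬝ᵥ (N *ᵥ z) := by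
    rw [hQ, hyz]
    simp only [Matrix.mulVec_add, Matrix.mulVec_smul, hNφ, add_dotProduct,
      dotProduct_add, smul_dotProduct, dotProduct_smul, smul_eq_mul,
      hφz, hzφ, hφNz]
    ring
  -- spectral bound
  have hkey := erub_spectral_key hn N hNH e hanti lam2 hl2 hgap s hφne hNφ z hφz
  have hzz : (0:ℝ) ≤ z ⬝ᵥ z := Finset.sum_nonneg fun i _ => mul_self_nonneg _
  have hQlb : (1 - lam2) * (z ⬝ᵥ z) ≤ Q := by rw [hQz]; nlinarith [hkey]
  -- pointwise identity
  have hxz : x u - x v = z u / s u - z v / s v := by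
    have hzu : z u = s u * x u - c * s u := by rw [hz_def]; simp [hy_def]
    have hzv : z v = s v * x v - c * s v := by rw [hz_def]; simp [hy_def]
    rw [hzu, hzv]
    have h1 := (hs u).ne'
    have h2 := (hs v).ne'
    field_simp
    ring
  -- Cauchy-Schwarz on two coordinates
  have hCS : (x u - x v) ^ 2 ≤ (z u ^ 2 + z v ^ 2) * (1 / d u + 1 / d v) := by
    rw [hxz, ← hs2 u, ← hs2 v]
    have h1 := (hs u).ne'
    have h2 := (hs v).ne'
    have h5 : (z u / s u - z v / s v) ^ 2 + (z u / s v + z v / s u) ^ 2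
        = (z u ^ 2 + z v ^ 2) * (1 / s u ^ 2 + 1 / s v ^ 2) := by
      field_simp
      ring
    nlinarith [sq_nonneg (z u / s v + z v / s u)]
  have htwo : z u ^ 2 + z v ^ 2 ≤ z ⬝ᵥ z := by
    have h0 : z u ^ 2 + z v ^ 2 = ∑ i ∈ ({u, v} : Finset (Fin n)), z i ^ 2 := by
      rw [Finset.sum_pair huv]
    have h1 : z ⬝ᵥ z = ∑ i, z i ^ 2 := Finset.sum_congr rfl fun i _ => (sq (z i)).symm
    rw [h0, h1]
    exact Finset.sum_le_sum_of_subset_of_nonneg (Finset.subset_univ _)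
      (fun i _ _ => sq_nonneg _)
  -- combine
  have hg : 0 < 1 - lam2 := by linarith
  have hdsum : (0:ℝ) ≤ 1 / d u + 1 / d v := by
    have h1 := hd u; have h2 := hd v; positivity
  rw [div_le_iff₀ hx]
  have h1 : (x u - x v) ^ 2 ≤ (z ⬝ᵥ z) * (1 / d u + 1 / d v) :=
    le_trans hCS (mul_le_mul_of_nonneg_right htwo hdsum)
  have h2 : (z ⬝ᵥ z) * (1 / d u + 1 / d v)
      ≤ 1 / (1 - lam2) * (1 / d u + 1 / d v) * Q := by
    rw [← sub_nonneg]
    have h3 : 1 / (1 - lam2) * (1 / d u + 1 / d v) * Q - (z ⬝ᵥ z) * (1 / d u + 1 / d v)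
        = (Q * (1 / d u + 1 / d v) - (1 - lam2) * (z ⬝ᵥ z) * (1 / d u + 1 / d v))
          / (1 - lam2) := by
      field_simp
    rw [h3]
    refine div_nonneg ?_ hg.le
    have h4 := mul_le_mul_of_nonneg_right hQlb hdsum
    linarith
  exact le_trans h1 h2
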